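/- For every real number x with 0 < x ≤ 2·log(1+√2), one has 2 < x · cosh(x/2) / sinh(x/2) ≤ 2√2 · log(1+√2). (This gives the bounds on the boundary lengths of the collar of a simple closed geodesic of length at most 2·arcsinh(1).) -/

import Mathlib

open Real Set

lemma arsinh_one_eq : Real.arsinh 1 = Real.log (1 + Real.sqrt 2) := by
  rw [Real.arsinh]
  norm_num [add_comm]

lemma coth_aux_hasDeriv (t : ℝ) (ht : t ≠ 0) :
    HasDerivAt (fun t : ℝ => t * Real.cosh t / Real.sinh t)
      (((Real.cosh t + t * Real.sinh t) * Real.sinh t - t * Real.cosh t * Real.cosh t) /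
        (Real.sinh t) ^ 2) t := by
  have h1 : HasDerivAt (fun t : ℝ => t * Real.cosh t)
      (1 * Real.cosh t + t * Real.sinh t) t :=
    (hasDerivAt_id t).mul (Real.hasDerivAt_cosh t)
  have h2 := (h1.div (Real.hasDerivAt_sinh t) (Real.sinh_ne_zero.2 ht))
  rw [one_mul] at h2
  exact h2

lemma sinh_lt_mul_cosh {t : ℝ} (ht : 0 < t) : Real.sinh t < t * Real.cosh t := by
  have key : StrictMonoOn (fun u : ℝ => u * Real.cosh u - Real.sinh u) (Set.Ici 0) := by
    apply strictMonoOn_of_deriv_pos (convex_Ici 0)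
    · fun_prop
    · intro u hu
      rw [interior_Ici, Set.mem_Ioi] at hu
      have h1 : HasDerivAt (fun u : ℝ => u * Real.cosh u - Real.sinh u)
          (1 * Real.cosh u + u * Real.sinh u - Real.cosh u) u :=
        ((hasDerivAt_id u).mul (Real.hasDerivAt_cosh u)).sub (Real.hasDerivAt_sinh u)
      rw [h1.deriv]
      have := Real.sinh_pos_iff.2 hu
      nlinarith
  have := key (Set.self_mem_Ici) (Set.mem_Ici.2 ht.le) ht
  simp at this
  linarith

lemma coth_aux_mono : StrictMonoOn (fun t : ℝ => t * Real.cosh t / Real.sinh t)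
    (Set.Ioi (0 : ℝ)) := by
  apply strictMonoOn_of_deriv_pos (convex_Ioi 0)
  · intro t ht
    exact ((coth_aux_hasDeriv t (ne_of_gt ht)).continuousAt).continuousWithinAt
  · intro t ht
    rw [interior_Ioi] at ht
    rw [(coth_aux_hasDeriv t (ne_of_gt ht)).deriv]
    apply div_pos
    · have hs := (Real.self_lt_sinh_iff.2 ht)
      have hc : 1 ≤ Real.cosh t := Real.one_le_cosh t
      have hsp : 0 < Real.sinh t := Real.sinh_pos_iff.2 ht
      nlinarith [Real.cosh_sq t]
    · have hsp : 0 < Real.sinh t := Real.sinh_pos_iff.2 ht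
      positivity

theorem collar_boundary_bounds (x : ℝ) (hx : 0 < x)
    (hx' : x ≤ 2 * Real.log (1 + Real.sqrt 2)) :
    2 < x * Real.cosh (x / 2) / Real.sinh (x / 2) ∧
      x * Real.cosh (x / 2) / Real.sinh (x / 2) ≤
        2 * Real.sqrt 2 * Real.log (1 + Real.sqrt 2) := by
  set t := x / 2 with ht
  have htpos : 0 < t := by positivity
  have hsp : 0 < Real.sinh t := Real.sinh_pos_iff.2 htpos
  constructor
  · rw [lt_div_iff₀ hsp]
    have hs := sinh_lt_mul_cosh htpos
    nlinarith
  · have hL : t ≤ Real.arsinh 1 := by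
      rw [arsinh_one_eq]; linarith
    have hmono := coth_aux_mono.monotoneOn (a := t) (b := Real.arsinh 1)
      (by exact htpos) (by rw [Set.mem_Ioi, Real.arsinh_pos_iff]; norm_num) hL
    rw [Real.sinh_arsinh, Real.cosh_arsinh] at hmono
    norm_num at hmono
    rw [arsinh_one_eq] at hmono
    have : x * Real.cosh t / Real.sinh t = 2 * (t * Real.cosh t / Real.sinh t) := by
      rw [ht]; ring
    rw [this]
    nlinarith [hmono]
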